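/- (Orthogonality of summands.) With the zero-padded MOSES iterates Ŷ_{k,r} ∈ ℝ^{n×Kb}, row spaces Q̂_{k,r} = span(Ŷ_{k,r}*), and Q̃_k = Q̂_{k−1,r} ⊕ I_k, it holds for every k ∈ [2:K] that ⟨Y_{k−1} − Ŷ_{k−1,r}, Y_K(P_{Q̃_k} − P_{Q̂_{k,r}})⟩ = 0, where ⟨·,·⟩ is the Frobenius (trace) inner product on ℝ^{n×Kb}. -/

import Mathlib

open MeasureTheory ProbabilityTheory Matrix

noncomputable def frobNorm {n m : ℕ} (A : Matrix (Fin n) (Fin m) ℝ) : ℝ :=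
  Real.sqrt (∑ i, ∑ j, (A i j) ^ 2)

noncomputable def frobInner {n m : ℕ} (A B : Matrix (Fin n) (Fin m) ℝ) : ℝ :=
  ∑ i, ∑ j, A i j * B i j

noncomputable def specNorm {n m : ℕ} (A : Matrix (Fin n) (Fin m) ℝ) : ℝ :=
  ‖LinearMap.toContinuousLinearMap (Matrix.toEuclideanLin A)‖

noncomputable def singularValue {n m : ℕ} (A : Matrix (Fin n) (Fin m) ℝ) (i : Fin n) : ℝ :=
  Real.sqrt ((Matrix.isHermitian_mul_conjTranspose_self A).eigenvalues
    (Tuple.sort (Matrix.isHermitian_mul_conjTranspose_self A).eigenvalues i.rev))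

noncomputable def residualSq {n m : ℕ} (r : ℕ) (A : Matrix (Fin n) (Fin m) ℝ) : ℝ :=
  ∑ i : Fin n, if r ≤ (i : ℕ) then (singularValue A i) ^ 2 else 0

def IsTruncSVD {n m : ℕ} (r : ℕ) (A Ar : Matrix (Fin n) (Fin m) ℝ) : Prop :=
  Ar.rank ≤ r ∧ ∀ B : Matrix (Fin n) (Fin m) ℝ, B.rank ≤ r →
    frobNorm (A - Ar) ≤ frobNorm (A - B)

noncomputable def colSpan {n m : ℕ} (A : Matrix (Fin n) (Fin m) ℝ) :
    Submodule ℝ (EuclideanSpace ℝ (Fin n)) :=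
  Submodule.span ℝ (Set.range fun j : Fin m =>
    ((WithLp.equiv 2 (Fin n → ℝ)).symm fun i => A i j))

noncomputable def rowSpan {n m : ℕ} (A : Matrix (Fin n) (Fin m) ℝ) :
    Submodule ℝ (EuclideanSpace ℝ (Fin m)) := colSpan Aᵀ

noncomputable def projMatrix {n : ℕ} (U : Submodule ℝ (EuclideanSpace ℝ (Fin n))) :
    Matrix (Fin n) (Fin n) ℝ :=
  Matrix.of fun i j =>
    (U.orthogonalProjection (EuclideanSpace.single j 1) : EuclideanSpace ℝ (Fin n)) i

noncomputable def coordSubspace {M : ℕ} (s t : ℕ) : Submodule ℝ (EuclideanSpace ℝ (Fin M)) :=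
  Submodule.span ℝ ((fun j : Fin M => (EuclideanSpace.single j (1:ℝ))) ''
    {j : Fin M | s ≤ (j : ℕ) ∧ (j : ℕ) < t})

def padTrunc {n M : ℕ} (A : Matrix (Fin n) (Fin M) ℝ) (m : ℕ) :
    Matrix (Fin n) (Fin M) ℝ :=
  Matrix.of fun i j => if (j : ℕ) < m then A i j else 0

def IsMOSES {n M : ℕ} (r b K : ℕ) (Y : Matrix (Fin n) (Fin M) ℝ)
    (Yhat : ℕ → Matrix (Fin n) (Fin M) ℝ) : Prop :=
  Yhat 0 = 0 ∧ ∀ k, 1 ≤ k → k ≤ K →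
    IsTruncSVD r (Yhat (k - 1) + (padTrunc Y (k * b) - padTrunc Y ((k - 1) * b))) (Yhat k)

noncomputable def stdGaussianSeq (n m : ℕ) : Measure (Fin n → Fin m → ℝ) :=
  Measure.pi fun _ => Measure.pi fun _ => gaussianReal 0 1

noncomputable def gaussianOfRoot {n : ℕ} (A : Matrix (Fin n) (Fin n) ℝ) :
    Measure (EuclideanSpace ℝ (Fin n)) :=
  (Measure.pi fun _ : Fin n => gaussianReal 0 1).map
    (fun g => (WithLp.equiv 2 (Fin n → ℝ)).symm (A.mulVec g))

namespace Stmt8Aux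

variable {n M : ℕ}

noncomputable def rowE (A : Matrix (Fin n) (Fin M) ℝ) (i : Fin n) : EuclideanSpace ℝ (Fin M) :=
  (WithLp.equiv 2 (Fin M → ℝ)).symm (A i)

@[simp] lemma rowE_apply (A : Matrix (Fin n) (Fin M) ℝ) (i : Fin n) (j : Fin M) :
    rowE A i j = A i j := rfl

lemma rowE_add (A B : Matrix (Fin n) (Fin M) ℝ) (i : Fin n) :
    rowE (A + B) i = rowE A i + rowE B i := rfl

lemma rowE_sub (A B : Matrix (Fin n) (Fin M) ℝ) (i : Fin n) :
    rowE (A - B) i = rowE A i - rowE B i := rfl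

lemma euclid_ext {x y : EuclideanSpace ℝ (Fin M)} (h : ∀ j, x j = y j) : x = y := (WithLp.ext_iff 2).2 (funext h)

lemma rowE_mem_rowSpan (A : Matrix (Fin n) (Fin M) ℝ) (i : Fin n) :
    rowE A i ∈ rowSpan A := by
  apply Submodule.subset_span
  refine ⟨i, ?_⟩
  congr 1

lemma rowSpan_le {A : Matrix (Fin n) (Fin M) ℝ} {U : Submodule ℝ (EuclideanSpace ℝ (Fin M))}
    (h : ∀ i, rowE A i ∈ U) : rowSpan A ≤ U := by
  apply Submodule.span_le.mpr
  rintro x ⟨j, rfl⟩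
  exact h j

lemma inner_orthogonalProjection_left_eq_right (U : Submodule ℝ (EuclideanSpace ℝ (Fin M)))
    (u v : EuclideanSpace ℝ (Fin M)) :
    inner ℝ (U.orthogonalProjection u : EuclideanSpace ℝ (Fin M)) v
      = inner ℝ u (U.orthogonalProjection v : EuclideanSpace ℝ (Fin M)) := by
  exact U.inner_starProjection_left_eq_right u v

lemma orthogonalProjection_eq_self_iff {U : Submodule ℝ (EuclideanSpace ℝ (Fin M))}
    {v : EuclideanSpace ℝ (Fin M)} :
    (U.orthogonalProjection v : EuclideanSpace ℝ (Fin M)) = v ↔ v ∈ U := by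
  exact U.starProjection_eq_self_iff (v := v)

lemma sub_orthogonalProjection_mem_orthogonal {U : Submodule ℝ (EuclideanSpace ℝ (Fin M))}
    (v : EuclideanSpace ℝ (Fin M)) :
    v - (U.orthogonalProjection v : EuclideanSpace ℝ (Fin M)) ∈ Uᗮ := by
  exact U.sub_starProjection_mem_orthogonal v

lemma single_eq_proj (U : Submodule ℝ (EuclideanSpace ℝ (Fin M))) (x : EuclideanSpace ℝ (Fin M))
    (j : Fin M) : (U.orthogonalProjection x : EuclideanSpace ℝ (Fin M)) j
      = ∑ l, (U.orthogonalProjection (EuclideanSpace.single j (1:ℝ)) :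
          EuclideanSpace ℝ (Fin M)) l * x l := by
  have h1 : (U.orthogonalProjection x : EuclideanSpace ℝ (Fin M)) j
      = inner (𝕜 := ℝ) (EuclideanSpace.single j (1:ℝ))
          ((U.orthogonalProjection x : EuclideanSpace ℝ (Fin M))) := by
    rw [EuclideanSpace.inner_single_left]; simp
  rw [h1, ← inner_orthogonalProjection_left_eq_right]
  rw [PiLp.inner_apply]
  simp [RCLike.inner_apply]
  exact Finset.sum_congr rfl fun l _ => mul_comm _ _

lemma mul_proj_row (A : Matrix (Fin n) (Fin M) ℝ) (U : Submodule ℝ (EuclideanSpace ℝ (Fin M)))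
    (i : Fin n) : rowE (A * projMatrix U) i
      = (U.orthogonalProjection (rowE A i) : EuclideanSpace ℝ (Fin M)) := by
  apply euclid_ext
  intro j
  rw [single_eq_proj]
  rw [rowE_apply, Matrix.mul_apply]
  simp only [projMatrix, Matrix.of_apply, rowE_apply]
  exact Finset.sum_congr rfl fun l _ => by ring

lemma mul_proj_eq_self {A : Matrix (Fin n) (Fin M) ℝ}
    {U : Submodule ℝ (EuclideanSpace ℝ (Fin M))} (h : ∀ i, rowE A i ∈ U) :
    A * projMatrix U = A := by
  ext i j
  have h2 : (U.orthogonalProjection (rowE A i) : EuclideanSpace ℝ (Fin M)) = rowE A i :=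
    orthogonalProjection_eq_self_iff.mpr (h i)
  have := congrArg (fun v => v j) (mul_proj_row A U i)
  rw [h2] at this
  exact this

lemma mul_proj_eq_zero {A : Matrix (Fin n) (Fin M) ℝ}
    {U : Submodule ℝ (EuclideanSpace ℝ (Fin M))} (h : ∀ i, rowE A i ∈ Uᗮ) :
    A * projMatrix U = 0 := by
  ext i j
  have h2 := Submodule.orthogonalProjectionOnto_apply_of_mem_orthogonal (h i)
  have := congrArg (fun v => v j) (mul_proj_row A U i)
  rw [h2] at this
  exact this

lemma frobInner_rows (A B : Matrix (Fin n) (Fin M) ℝ) :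
    frobInner A B = ∑ i, inner (𝕜 := ℝ) (rowE A i) (rowE B i) := by
  unfold frobInner
  refine Finset.sum_congr rfl fun i _ => ?_
  rw [PiLp.inner_apply]
  simp [RCLike.inner_apply]
  exact Finset.sum_congr rfl fun j _ => mul_comm _ _

lemma frobInner_eq_zero_of_orth {A B : Matrix (Fin n) (Fin M) ℝ}
    {U : Submodule ℝ (EuclideanSpace ℝ (Fin M))}
    (hA : ∀ i, rowE A i ∈ U) (hB : ∀ i, rowE B i ∈ Uᗮ) : frobInner A B = 0 := by
  rw [frobInner_rows]
  exact Finset.sum_eq_zero fun i _ =>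
    Submodule.inner_right_of_mem_orthogonal (hA i) (hB i)

lemma frobInner_mul_right (A B : Matrix (Fin n) (Fin M) ℝ) (C : Matrix (Fin M) (Fin M) ℝ) :
    frobInner A (B * C) = frobInner (A * Cᵀ) B := by
  unfold frobInner
  simp only [Matrix.mul_apply, Matrix.transpose_apply, Finset.mul_sum, Finset.sum_mul]
  rw [Finset.sum_congr rfl fun i _ => Finset.sum_comm]
  refine Finset.sum_congr rfl fun i _ => Finset.sum_congr rfl fun l _ =>
    Finset.sum_congr rfl fun j _ => by ring

end Stmt8Aux

namespace Stmt8Aux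

variable {n M : ℕ}

noncomputable def frobSq (A : Matrix (Fin n) (Fin M) ℝ) : ℝ := frobInner A A

lemma frobNorm_eq (A : Matrix (Fin n) (Fin M) ℝ) : frobNorm A = Real.sqrt (frobSq A) := by
  unfold frobNorm frobSq frobInner
  congr 1
  exact Finset.sum_congr rfl fun i _ => Finset.sum_congr rfl fun j _ => sq (A i j)

lemma frobSq_nonneg (A : Matrix (Fin n) (Fin M) ℝ) : 0 ≤ frobSq A := by
  unfold frobSq frobInner
  exact Finset.sum_nonneg fun i _ => Finset.sum_nonneg fun j _ => mul_self_nonneg _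

lemma eq_zero_of_frobSq (A : Matrix (Fin n) (Fin M) ℝ) (h : frobSq A ≤ 0) : A = 0 := by
  have h0 : frobSq A = 0 := le_antisymm h (frobSq_nonneg A)
  ext i j
  have h1 : ∀ i ∈ (Finset.univ : Finset (Fin n)), (0:ℝ) ≤ ∑ j, A i j * A i j :=
    fun i _ => Finset.sum_nonneg fun j _ => mul_self_nonneg _
  have h2 := (Finset.sum_eq_zero_iff_of_nonneg h1).mp h0 i (Finset.mem_univ i)
  have h3 := (Finset.sum_eq_zero_iff_of_nonneg
    (fun j _ => mul_self_nonneg (A i j))).mp h2 j (Finset.mem_univ j)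
  have := mul_self_eq_zero.mp h3
  simpa using this

lemma frobInner_comm (A B : Matrix (Fin n) (Fin M) ℝ) : frobInner A B = frobInner B A := by
  unfold frobInner
  exact Finset.sum_congr rfl fun i _ => Finset.sum_congr rfl fun j _ => mul_comm _ _

lemma frobInner_add_left (A B C : Matrix (Fin n) (Fin M) ℝ) :
    frobInner (A + B) C = frobInner A C + frobInner B C := by
  unfold frobInner
  rw [← Finset.sum_add_distrib]
  refine Finset.sum_congr rfl fun i _ => ?_
  rw [← Finset.sum_add_distrib]
  exact Finset.sum_congr rfl fun j _ => by simp [Matrix.add_apply]; ring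

lemma frobSq_add_of_orth {C D : Matrix (Fin n) (Fin M) ℝ}
    {U : Submodule ℝ (EuclideanSpace ℝ (Fin M))}
    (hC : ∀ i, rowE C i ∈ U) (hD : ∀ i, rowE D i ∈ Uᗮ) :
    frobSq (C + D) = frobSq C + frobSq D := by
  have hcross : frobInner C D = 0 := frobInner_eq_zero_of_orth hC hD
  have hcross' : frobInner D C = 0 := (frobInner_comm D C).trans hcross
  unfold frobSq
  rw [frobInner_add_left]
  rw [frobInner_comm C (C + D), frobInner_add_left, frobInner_comm D (C + D),
    frobInner_add_left]
  rw [hcross, hcross', frobInner_comm C C, frobInner_comm D D]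
  ring

lemma frobSq_le_of_frobNorm_le {A B : Matrix (Fin n) (Fin M) ℝ}
    (h : frobNorm A ≤ frobNorm B) : frobSq A ≤ frobSq B := by
  rw [frobNorm_eq, frobNorm_eq] at h
  have := mul_self_le_mul_self (Real.sqrt_nonneg _) h
  rwa [Real.mul_self_sqrt (frobSq_nonneg A), Real.mul_self_sqrt (frobSq_nonneg B)] at this

lemma map_rowSpan (A : Matrix (Fin n) (Fin M) ℝ) :
    Submodule.map ((WithLp.linearEquiv 2 ℝ (Fin M → ℝ)) :
        WithLp 2 (Fin M → ℝ) →ₗ[ℝ] (Fin M → ℝ)) (rowSpan A)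
      = Submodule.span ℝ (Set.range A) := by
  unfold rowSpan colSpan
  rw [Submodule.map_span, ← Set.range_comp]
  congr 1

lemma rank_eq_finrank_rowSpan (A : Matrix (Fin n) (Fin M) ℝ) :
    A.rank = Module.finrank ℝ (rowSpan A) := by
  rw [Matrix.rank_eq_finrank_span_row, show A.row = A from rfl, ← map_rowSpan A,
    LinearEquiv.finrank_map_eq (WithLp.linearEquiv 2 ℝ (Fin M → ℝ)) (rowSpan A)]

lemma rank_le_of_rows_mem {A : Matrix (Fin n) (Fin M) ℝ}
    {U : Submodule ℝ (EuclideanSpace ℝ (Fin M))} (h : ∀ i, rowE A i ∈ U) :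
    A.rank ≤ Module.finrank ℝ U := by
  rw [rank_eq_finrank_rowSpan]
  exact Submodule.finrank_mono (rowSpan_le h)

lemma finrank_rowSpan_le {A : Matrix (Fin n) (Fin M) ℝ} {r : ℕ} (h : A.rank ≤ r) :
    Module.finrank ℝ (rowSpan A) ≤ r := by
  rw [← rank_eq_finrank_rowSpan]; exact h

end Stmt8Aux

namespace Stmt8Aux

variable {n M : ℕ}

lemma rows_mul_proj_mem (A : Matrix (Fin n) (Fin M) ℝ)
    (U : Submodule ℝ (EuclideanSpace ℝ (Fin M))) (i : Fin n) :
    rowE (A * projMatrix U) i ∈ U := by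
  rw [mul_proj_row]; exact (U.orthogonalProjection (rowE A i)).2

lemma rows_sub_mul_proj_mem (A : Matrix (Fin n) (Fin M) ℝ)
    (U : Submodule ℝ (EuclideanSpace ℝ (Fin M))) (i : Fin n) :
    rowE (A - A * projMatrix U) i ∈ Uᗮ := by
  rw [rowE_sub, mul_proj_row]
  exact sub_orthogonalProjection_mem_orthogonal (rowE A i)

lemma pyth (X : Matrix (Fin n) (Fin M) ℝ) (V : Submodule ℝ (EuclideanSpace ℝ (Fin M))) :
    frobSq X = frobSq (X * projMatrix V) + frobSq (X - X * projMatrix V) := by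
  have hX : X = (X * projMatrix V) + (X - X * projMatrix V) := by abel
  nth_rewrite 1 [hX]
  exact frobSq_add_of_orth (rows_mul_proj_mem X V) (rows_sub_mul_proj_mem X V)

lemma truncSVD_rows_mem {r : ℕ} {X Xr : Matrix (Fin n) (Fin M) ℝ} (h : IsTruncSVD r X Xr) :
    ∀ i, rowE Xr i ∈ rowSpan X := by
  set V := rowSpan X with hV
  set Q := projMatrix V with hQ
  have hXQ : X * Q = X := mul_proj_eq_self (fun i => rowE_mem_rowSpan X i)
  have hrank : (Xr * Q).rank ≤ r := le_trans (Matrix.rank_mul_le_left Xr Q) h.1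
  have hopt := h.2 (Xr * Q) hrank
  have h2 : X - Xr * Q = (X - Xr) * Q := by rw [Matrix.sub_mul, hXQ]
  have hle : frobSq (X - Xr) ≤ frobSq ((X - Xr) * Q) := by
    rw [← h2]; exact frobSq_le_of_frobNorm_le hopt
  have hp := pyth (X - Xr) V
  have hz : (X - Xr) - (X - Xr) * Q = 0 := by
    refine eq_zero_of_frobSq _ ?_
    have := frobSq_nonneg ((X - Xr) * Q)
    rw [← hQ] at hp
    linarith
  have h4 : X - Xr = (X - Xr) * Q := by rwa [sub_eq_zero] at hz
  have h5 : Xr * Q = Xr := by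
    have h6 : (X - Xr) * Q = X * Q - Xr * Q := Matrix.sub_mul X Xr Q
    rw [h6, hXQ] at h4
    exact (sub_right_inj.mp h4.symm)
  intro i
  have h7 : rowE Xr i = rowE (Xr * Q) i := by rw [h5]
  rw [h7, hQ, mul_proj_row]
  exact (V.orthogonalProjection (rowE Xr i)).2

lemma truncSVD_residual_orth {r : ℕ} {X Xr : Matrix (Fin n) (Fin M) ℝ} (h : IsTruncSVD r X Xr) :
    ∀ i, rowE (X - Xr) i ∈ (rowSpan Xr)ᗮ := by
  set U := rowSpan Xr with hU
  set P := projMatrix U with hP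
  have hrank : (X * P).rank ≤ r := by
    refine le_trans (rank_le_of_rows_mem (fun i => ?_)) (finrank_rowSpan_le h.1)
    exact rows_mul_proj_mem X U i
  have hopt := h.2 (X * P) hrank
  have hle : frobSq (X - Xr) ≤ frobSq (X - X * P) := frobSq_le_of_frobNorm_le hopt
  have hdecomp : X - Xr = (X * P - Xr) + (X - X * P) := by abel
  have hsum : frobSq (X - Xr) = frobSq (X * P - Xr) + frobSq (X - X * P) := by
    rw [hdecomp]
    refine frobSq_add_of_orth (fun i => ?_) (rows_sub_mul_proj_mem X U)
    rw [rowE_sub]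
    exact Submodule.sub_mem U (rows_mul_proj_mem X U i) (rowE_mem_rowSpan Xr i)
  have hz : X * P - Xr = 0 := by
    refine eq_zero_of_frobSq _ ?_
    linarith
  have hXr : Xr = X * P := (sub_eq_zero.mp hz).symm
  intro i
  have : X - Xr = X - X * P := by rw [hXr]
  rw [this]
  exact rows_sub_mul_proj_mem X U i

end Stmt8Aux

namespace Stmt8Aux

variable {n M : ℕ}

/-- vectors supported on coordinates `< m` -/
def suppSub (m : ℕ) : Submodule ℝ (EuclideanSpace ℝ (Fin M)) where
  carrier := {v | ∀ t : Fin M, m ≤ (t : ℕ) → v t = 0}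
  add_mem' := by
    intro a b ha hb t ht
    have : (a + b) t = a t + b t := rfl
    rw [this, ha t ht, hb t ht, add_zero]
  zero_mem' := by intro t _; rfl
  smul_mem' := by
    intro c v hv t ht
    have : (c • v) t = c * v t := rfl
    rw [this, hv t ht, mul_zero]

lemma mem_suppSub {m : ℕ} {v : EuclideanSpace ℝ (Fin M)} :
    v ∈ (suppSub m : Submodule ℝ (EuclideanSpace ℝ (Fin M))) ↔
      ∀ t : Fin M, m ≤ (t : ℕ) → v t = 0 := Iff.rfl

lemma suppSub_mono {m m' : ℕ} (h : m ≤ m') :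
    (suppSub m : Submodule ℝ (EuclideanSpace ℝ (Fin M))) ≤ suppSub m' :=
  fun v hv t ht => hv t (le_trans h ht)

lemma euclid_sum_single (v : EuclideanSpace ℝ (Fin M)) :
    ∑ j, v j • EuclideanSpace.single j (1:ℝ) = v := by
  have := (EuclideanSpace.basisFun (Fin M) ℝ).sum_repr v
  simpa [EuclideanSpace.basisFun_apply, EuclideanSpace.basisFun_repr] using this

lemma mem_coord {s t : ℕ} {v : EuclideanSpace ℝ (Fin M)}
    (hv : ∀ j : Fin M, ((j : ℕ) < s ∨ t ≤ (j : ℕ)) → v j = 0) :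
    v ∈ (coordSubspace s t : Submodule ℝ (EuclideanSpace ℝ (Fin M))) := by
  rw [← euclid_sum_single v]
  apply Submodule.sum_mem
  intro j _
  by_cases hj : s ≤ (j : ℕ) ∧ (j : ℕ) < t
  · exact Submodule.smul_mem _ _ (Submodule.subset_span ⟨j, hj, rfl⟩)
  · have h0 : v j = 0 := hv j (by omega)
    rw [h0, zero_smul]
    exact Submodule.zero_mem _

lemma coord_le_supp {s t : ℕ} :
    (coordSubspace s t : Submodule ℝ (EuclideanSpace ℝ (Fin M))) ≤ suppSub t := by
  apply Submodule.span_le.mpr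
  rintro x ⟨j, ⟨hj1, hj2⟩, rfl⟩
  intro t' ht'
  show EuclideanSpace.single j (1:ℝ) t' = 0
  rw [EuclideanSpace.single_apply]
  have : t' ≠ j := by
    intro hh; rw [hh] at ht'; omega
  simp [this]

lemma supp_le_coord_orth {s t : ℕ} :
    (suppSub s : Submodule ℝ (EuclideanSpace ℝ (Fin M))) ≤ (coordSubspace s t)ᗮ := by
  intro v hv
  rw [Submodule.mem_orthogonal]
  intro u hu
  induction hu using Submodule.span_induction with
  | mem x hx =>
    obtain ⟨j, ⟨hj1, _⟩, rfl⟩ := hx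
    rw [EuclideanSpace.inner_single_left]
    simp [hv j hj1]
  | zero => simp
  | add x y _ _ hx hy => rw [inner_add_left, hx, hy, add_zero]
  | smul c x _ hx => rw [inner_smul_left, hx, mul_zero]

end Stmt8Aux

namespace Stmt8Aux

variable {n M : ℕ}

lemma apply_eq_inner (x : EuclideanSpace ℝ (Fin M)) (j : Fin M) :
    x j = inner (𝕜 := ℝ) (EuclideanSpace.single j (1:ℝ)) x := by
  rw [EuclideanSpace.inner_single_left]; simp

lemma projMatrix_transpose (U : Submodule ℝ (EuclideanSpace ℝ (Fin M))) :
    (projMatrix U)ᵀ = projMatrix U := by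
  ext i j
  show projMatrix U j i = projMatrix U i j
  unfold projMatrix
  simp only [Matrix.of_apply]
  rw [apply_eq_inner ((U.orthogonalProjection (EuclideanSpace.single i (1:ℝ)) :
    EuclideanSpace ℝ (Fin M))) j,
    apply_eq_inner ((U.orthogonalProjection (EuclideanSpace.single j (1:ℝ)) :
    EuclideanSpace ℝ (Fin M))) i]
  rw [← inner_orthogonalProjection_left_eq_right]
  rw [real_inner_comm]

lemma pad_rows_supp (Y : Matrix (Fin n) (Fin M) ℝ) (m : ℕ) (i : Fin n) :
    rowE (padTrunc Y m) i ∈ (suppSub m : Submodule ℝ (EuclideanSpace ℝ (Fin M))) := by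
  intro t ht
  show (if (t : ℕ) < m then Y i t else 0) = 0
  rw [if_neg (by omega)]

lemma pad_diff_rows (Y : Matrix (Fin n) (Fin M) ℝ) {m1 m2 : ℕ} (h : m1 ≤ m2) (i : Fin n) :
    rowE (padTrunc Y m2 - padTrunc Y m1) i
      ∈ (coordSubspace m1 m2 : Submodule ℝ (EuclideanSpace ℝ (Fin M))) := by
  apply mem_coord
  intro j hj
  show (if (j : ℕ) < m2 then Y i j else 0) - (if (j : ℕ) < m1 then Y i j else 0) = 0
  rcases hj with hj | hj
  · rw [if_pos (by omega), if_pos (by omega), sub_self]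
  · rw [if_neg (by omega), if_neg (by omega), sub_self]

lemma moses_induction {r b K : ℕ} {Y : Matrix (Fin n) (Fin M) ℝ}
    {Yhat : ℕ → Matrix (Fin n) (Fin M) ℝ} (hmoses : IsMOSES r b K Y Yhat) :
    ∀ j, j ≤ K →
      (∀ i, rowE (Yhat j) i ∈ (suppSub (j * b) : Submodule ℝ (EuclideanSpace ℝ (Fin M)))) ∧
      (∀ i, rowE (padTrunc Y (j * b) - Yhat j) i ∈ (rowSpan (Yhat j))ᗮ) := by
  intro j
  induction j with
  | zero =>
    intro _
    constructor
    · intro i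
      rw [hmoses.1]
      exact Submodule.zero_mem _
    · intro i
      have h0 : rowE (padTrunc Y (0 * b) - Yhat 0) i = 0 := by
        apply euclid_ext
        intro t
        rw [hmoses.1]
        show (if (t : ℕ) < 0 * b then Y i t else 0) - 0 = 0
        simp
      rw [h0]
      exact Submodule.zero_mem _
  | succ j ih =>
    intro hjK
    have IH := ih (by omega)
    have hsvd := hmoses.2 (j + 1) (by omega) hjK
    simp only [Nat.add_sub_cancel] at hsvd
    set X := Yhat j + (padTrunc Y ((j + 1) * b) - padTrunc Y (j * b)) with hX
    set W := rowSpan (Yhat j) ⊔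
      (coordSubspace (j * b) ((j + 1) * b) : Submodule ℝ (EuclideanSpace ℝ (Fin M))) with hW
    have hmul : j * b ≤ (j + 1) * b := Nat.mul_le_mul (Nat.le_succ j) le_rfl
    have FX : ∀ i, rowE X i ∈ W := by
      intro i
      rw [hX, rowE_add]
      exact Submodule.add_mem _ (Submodule.mem_sup_left (rowE_mem_rowSpan _ i))
        (Submodule.mem_sup_right (pad_diff_rows Y hmul i))
    have F1 : ∀ i, rowE (Yhat (j + 1)) i ∈ rowSpan X := truncSVD_rows_mem hsvd
    have hXW : rowSpan X ≤ W := rowSpan_le FX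
    have hWsupp : W ≤ suppSub ((j + 1) * b) := by
      rw [hW]
      exact sup_le (le_trans (rowSpan_le IH.1) (suppSub_mono hmul)) coord_le_supp
    refine ⟨fun i => hWsupp (hXW (F1 i)), fun i => ?_⟩
    have hA : padTrunc Y ((j + 1) * b) - Yhat (j + 1)
        = (padTrunc Y (j * b) - Yhat j) + (X - Yhat (j + 1)) := by
      rw [hX]; abel
    rw [hA, rowE_add]
    apply Submodule.add_mem
    · have hsupp : rowE (padTrunc Y (j * b) - Yhat j) i ∈
          (suppSub (j * b) : Submodule ℝ (EuclideanSpace ℝ (Fin M))) := by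
        rw [rowE_sub]
        exact Submodule.sub_mem _ (pad_rows_supp Y (j * b) i) (IH.1 i)
      have h1 : rowE (padTrunc Y (j * b) - Yhat j) i ∈ Wᗮ := by
        rw [hW, ← Submodule.inf_orthogonal]
        exact Submodule.mem_inf.mpr ⟨IH.2 i, supp_le_coord_orth hsupp⟩
      exact Submodule.orthogonal_le (le_trans (rowSpan_le F1) hXW) h1
    · exact truncSVD_residual_orth hsvd i

end Stmt8Aux

namespace Stmt8Aux

lemma frobInner_zero_left {n M : ℕ} (B : Matrix (Fin n) (Fin M) ℝ) :
    frobInner 0 B = 0 := by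
  unfold frobInner
  simp

end Stmt8Aux

open Stmt8Aux

/-- Orthogonality of summands: with the zero-padded MOSES iterates
`Ŷ_{k,r} ∈ ℝ^{n×Kb}`, row spaces `Q̂_{k,r} = span(Ŷ_{k,r}*)` and
`Q̃_k = Q̂_{k−1,r} ⊕ I_k`, for every `k ∈ [2:K]`:
`⟨Y_{k−1} − Ŷ_{k−1,r}, Y_K(P_{Q̃_k} − P_{Q̂_{k,r}})⟩ = 0` in the Frobenius inner
product on `ℝ^{n×Kb}`. -/
theorem stmt8 (n M r b K : ℕ) (hM : M = K * b)
    (Y : Matrix (Fin n) (Fin M) ℝ)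
    (Yhat : ℕ → Matrix (Fin n) (Fin M) ℝ) (hmoses : IsMOSES r b K Y Yhat) :
    ∀ k, 2 ≤ k → k ≤ K →
      frobInner (padTrunc Y ((k - 1) * b) - Yhat (k - 1))
        (Y * (projMatrix (rowSpan (Yhat (k - 1)) ⊔ coordSubspace ((k - 1) * b) (k * b)) -
              projMatrix (rowSpan (Yhat k)))) = 0 := by
  intro k hk2 hkK
  obtain ⟨j, rfl⟩ : ∃ j, k = j + 1 := ⟨k - 1, by omega⟩
  simp only [Nat.add_sub_cancel]
  have hsvd := hmoses.2 (j + 1) (by omega) hkK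
  simp only [Nat.add_sub_cancel] at hsvd
  have IH := moses_induction hmoses j (by omega)
  set A := padTrunc Y (j * b) - Yhat j with hA
  set W := rowSpan (Yhat j) ⊔
    (coordSubspace (j * b) ((j + 1) * b) : Submodule ℝ (EuclideanSpace ℝ (Fin M))) with hW
  have hmul : j * b ≤ (j + 1) * b := Nat.mul_le_mul (Nat.le_succ j) le_rfl
  have hAW : ∀ i, rowE A i ∈ Wᗮ := by
    intro i
    have hsupp : rowE A i ∈ (suppSub (j * b) : Submodule ℝ (EuclideanSpace ℝ (Fin M))) := by
      rw [hA, rowE_sub]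
      exact Submodule.sub_mem _ (pad_rows_supp Y (j * b) i) (IH.1 i)
    rw [hW, ← Submodule.inf_orthogonal]
    exact Submodule.mem_inf.mpr ⟨IH.2 i, supp_le_coord_orth hsupp⟩
  have FX : ∀ i, rowE (Yhat j + (padTrunc Y ((j + 1) * b) - padTrunc Y (j * b))) i ∈ W := by
    intro i
    rw [rowE_add]
    exact Submodule.add_mem _ (Submodule.mem_sup_left (rowE_mem_rowSpan _ i))
      (Submodule.mem_sup_right (pad_diff_rows Y hmul i))
  have hQle : rowSpan (Yhat (j + 1)) ≤ W :=
    le_trans (rowSpan_le (truncSVD_rows_mem hsvd)) (rowSpan_le FX)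
  have hA2 : ∀ i, rowE A i ∈ (rowSpan (Yhat (j + 1)))ᗮ :=
    fun i => Submodule.orthogonal_le hQle (hAW i)
  have e1 : A * projMatrix W = 0 := mul_proj_eq_zero hAW
  have e2 : A * projMatrix (rowSpan (Yhat (j + 1))) = 0 := mul_proj_eq_zero hA2
  rw [frobInner_mul_right, Matrix.transpose_sub, projMatrix_transpose, projMatrix_transpose,
    Matrix.mul_sub, e1, e2, sub_zero, frobInner_zero_left]
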